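/- arXiv:2601.13756 — 2 statements merged into one kernel-verified Lean document; each statement's English description precedes it below -/
import Mathlib

section
/- Let n ∈ ℕ with n > 1 and let λ̄ be a minimizer of σ(B(·)) over Λ_n with σ̄ = σ(B(λ̄)). Then 2√(1 − 4 ln(2)/(n+1)) < σ̄ < 2√(1 − 1/(n+1)). -/
open Real

/-- The `(n+2) × (n+2)` symmetric tridiagonal matrix `B(λ)` with zero diagonal and
entries `λ_{j}^{-1/2}` on the sub/super-diagonals (0-based indexing: the entry in
positions `(i, i+1)` and `(i+1, i)` is `(l i)^{-1/2}` for `i = 0, …, n`). -/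
noncomputable def Bmat (n : ℕ) (l : Fin (n+1) → ℝ) :
    Matrix (Fin (n+2)) (Fin (n+2)) ℝ :=
  Matrix.of fun i j =>
    if h1 : (i : ℕ) + 1 = (j : ℕ) then
      l ⟨(i : ℕ), by have := j.isLt; omega⟩ ^ (-(1/2) : ℝ)
    else if h2 : (j : ℕ) + 1 = (i : ℕ) then
      l ⟨(j : ℕ), by have := i.isLt; omega⟩ ^ (-(1/2) : ℝ)
    else 0

/-- The largest eigenvalue (Perron root) of `B(λ)`. -/
noncomputable def sigmaB (n : ℕ) (l : Fin (n+1) → ℝ) : ℝ :=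
  sSup {μ : ℝ | ∃ v : Fin (n+2) → ℝ, v ≠ 0 ∧ (Bmat n l).mulVec v = μ • v}

/-- The feasible set `Λ_n`: all entries positive and `(1/(n+1)) ∑ λ_i ≤ 1`. -/
def Feasible (n : ℕ) (l : Fin (n+1) → ℝ) : Prop :=
  (∀ i, 0 < l i) ∧ (∑ i, l i) / ((n : ℝ) + 1) ≤ 1

/-- `λ̄` is a minimizer of `σ(B(·))` over `Λ_n`. -/
def IsMinimizer (n : ℕ) (l : Fin (n+1) → ℝ) : Prop :=
  Feasible n l ∧ ∀ m : Fin (n+1) → ℝ, Feasible n m → sigmaB n l ≤ sigmaB n m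

/-- A Perron vector of `B(λ)`: positive entries, Euclidean norm one,
eigenvector for the Perron root. -/
def IsPerronVector (n : ℕ) (l : Fin (n+1) → ℝ) (v : Fin (n+2) → ℝ) : Prop :=
  (∀ i, 0 < v i) ∧ (∑ i, v i ^ 2) = 1 ∧ (Bmat n l).mulVec v = sigmaB n l • v

lemma Bmat_symm (n : ℕ) (l : Fin (n+1) → ℝ) (i j : Fin (n+2)) :
    Bmat n l i j = Bmat n l j i := by
  unfold Bmat
  simp only [Matrix.of_apply]
  by_cases h1 : (i : ℕ) + 1 = (j : ℕ)
  · have h2 : ¬ ((j : ℕ) + 1 = (i : ℕ)) := by omega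
    rw [dif_pos h1, dif_neg h2, dif_pos h1]
  · by_cases h2 : (j : ℕ) + 1 = (i : ℕ)
    · rw [dif_neg h1, dif_pos h2, dif_pos h2]
    · rw [dif_neg h1, dif_neg h2, dif_neg h2, dif_neg h1]

lemma Bmat_mulVec (n : ℕ) (l : Fin (n+1) → ℝ) (w : Fin (n+2) → ℝ) (i : Fin (n+2)) :
    (Bmat n l).mulVec w i =
      (if h : (i : ℕ) + 1 < n + 2 then
        l ⟨(i : ℕ), by omega⟩ ^ (-(1/2) : ℝ) * w ⟨(i : ℕ) + 1, h⟩ else 0) +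
      (if h : 0 < (i : ℕ) then
        l ⟨(i : ℕ) - 1, by have := i.isLt; omega⟩ ^ (-(1/2) : ℝ) * w ⟨(i : ℕ) - 1, by omega⟩
       else 0) := by
  unfold Matrix.mulVec dotProduct Bmat
  simp only [Matrix.of_apply]
  have : ∀ j : Fin (n+2),
      (if h1 : (i : ℕ) + 1 = (j : ℕ) then
        l ⟨(i : ℕ), by have := j.isLt; omega⟩ ^ (-(1/2) : ℝ)
      else if h2 : (j : ℕ) + 1 = (i : ℕ) then
        l ⟨(j : ℕ), by have := i.isLt; omega⟩ ^ (-(1/2) : ℝ)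
      else 0) * w j
      = (if h1 : (i : ℕ) + 1 = (j : ℕ) then
          l ⟨(i : ℕ), by have := j.isLt; omega⟩ ^ (-(1/2) : ℝ) * w j else 0)
        + (if h2 : (j : ℕ) + 1 = (i : ℕ) then
          l ⟨(j : ℕ), by have := i.isLt; omega⟩ ^ (-(1/2) : ℝ) * w j else 0) := by
    intro j
    by_cases h1 : (i : ℕ) + 1 = (j : ℕ)
    · have h2 : ¬ ((j : ℕ) + 1 = (i : ℕ)) := by omega
      rw [dif_pos h1, dif_pos h1, dif_neg h2, add_zero]
    · by_cases h2 : (j : ℕ) + 1 = (i : ℕ)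
      · rw [dif_neg h1, dif_pos h2, dif_neg h1, dif_pos h2, zero_add]
      · rw [dif_neg h1, dif_neg h2, dif_neg h1, dif_neg h2, zero_mul, add_zero]
  rw [Finset.sum_congr rfl (fun j _ => this j), Finset.sum_add_distrib]
  congr 1
  · by_cases h : (i : ℕ) + 1 < n + 2
    · rw [dif_pos h]
      rw [Finset.sum_eq_single (⟨(i : ℕ) + 1, h⟩ : Fin (n+2))]
      · rw [dif_pos rfl]
      · intro j _ hj
        rw [dif_neg (fun hc => hj (Fin.ext hc.symm))]
      · simp
    · rw [dif_neg h]
      apply Finset.sum_eq_zero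
      intro j _
      exact dif_neg (fun hc => h (by have := j.isLt; omega))
  · by_cases h : 0 < (i : ℕ)
    · rw [dif_pos h]
      rw [Finset.sum_eq_single (⟨(i : ℕ) - 1, by have := i.isLt; omega⟩ : Fin (n+2))]
      · rw [dif_pos (show ((i : ℕ) - 1) + 1 = (i : ℕ) by omega)]
      · intro j _ hj
        exact dif_neg (fun hc => hj (Fin.ext (show (j : ℕ) = (i : ℕ) - 1 by omega)))
      · simp
    · rw [dif_neg h]
      apply Finset.sum_eq_zero
      intro j _
      rw [dif_neg (by omega)]

lemma Bmat_nonneg (n : ℕ) (l : Fin (n+1) → ℝ) (hl : ∀ i, 0 < l i) (i j : Fin (n+2)) :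
    0 ≤ Bmat n l i j := by
  unfold Bmat
  simp only [Matrix.of_apply]
  split_ifs
  · exact Real.rpow_nonneg (hl _).le _
  · exact Real.rpow_nonneg (hl _).le _
  · exact le_refl 0

-- generic eigenvalue bound
lemma eig_abs_le (n : ℕ) (l : Fin (n+1) → ℝ) {μ : ℝ} {v : Fin (n+2) → ℝ}
    (hv : v ≠ 0) (h : (Bmat n l).mulVec v = μ • v) :
    |μ| ≤ Finset.univ.sup' (by simp [Finset.univ_nonempty]) (fun i => ∑ j, |Bmat n l i j|) := by
  obtain ⟨i₀, -, hi₀⟩ := Finset.exists_max_image Finset.univ (fun i => |v i|)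
    ⟨0, Finset.mem_univ 0⟩
  have hvi₀ : 0 < |v i₀| := by
    rcases Function.ne_iff.1 hv with ⟨k, hk⟩
    exact lt_of_lt_of_le (abs_pos.2 hk) (hi₀ k (Finset.mem_univ k))
  have key : |μ| * |v i₀| ≤ (∑ j, |Bmat n l i₀ j|) * |v i₀| := by
    have h1 : |μ| * |v i₀| = |((Bmat n l).mulVec v) i₀| := by
      rw [h]; simp [abs_mul]
    rw [h1]
    calc |((Bmat n l).mulVec v) i₀| = |∑ j, Bmat n l i₀ j * v j| := rfl
      _ ≤ ∑ j, |Bmat n l i₀ j * v j| := Finset.abs_sum_le_sum_abs _ _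
      _ ≤ ∑ j, |Bmat n l i₀ j| * |v i₀| := by
          apply Finset.sum_le_sum
          intro j _
          rw [abs_mul]
          exact mul_le_mul_of_nonneg_left (hi₀ j (Finset.mem_univ j)) (abs_nonneg _)
      _ = (∑ j, |Bmat n l i₀ j|) * |v i₀| := by rw [Finset.sum_mul]
  have := le_of_mul_le_mul_right key hvi₀
  exact this.trans (Finset.le_sup' (fun i => ∑ j, |Bmat n l i j|) (Finset.mem_univ i₀))

lemma bddAbove_eigs (n : ℕ) (l : Fin (n+1) → ℝ) :
    BddAbove {μ : ℝ | ∃ v : Fin (n+2) → ℝ, v ≠ 0 ∧ (Bmat n l).mulVec v = μ • v} := by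
  refine ⟨Finset.univ.sup' (by simp [Finset.univ_nonempty]) (fun i => ∑ j, |Bmat n l i j|), ?_⟩
  rintro μ ⟨v, hv, h⟩
  exact (le_abs_self μ).trans (eig_abs_le n l hv h)

-- Perron: if v > 0 is an eigenvector with eigenvalue σ, every eigenvalue ≤ σ
lemma eig_le_perron (n : ℕ) (l : Fin (n+1) → ℝ) (hl : ∀ i, 0 < l i)
    {σ : ℝ} {v : Fin (n+2) → ℝ} (hv : ∀ i, 0 < v i)
    (hσ : (Bmat n l).mulVec v = σ • v)
    {μ : ℝ} {w : Fin (n+2) → ℝ} (hw : w ≠ 0) (hμ : (Bmat n l).mulVec w = μ • w) :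
    μ ≤ σ := by
  have key : |μ| * (∑ i, v i * |w i|) ≤ σ * (∑ i, v i * |w i|) := by
    calc |μ| * (∑ i, v i * |w i|) = ∑ i, v i * |μ * w i| := by
          rw [Finset.mul_sum]
          exact Finset.sum_congr rfl fun i _ => by rw [abs_mul]; ring
      _ = ∑ i, v i * |((Bmat n l).mulVec w) i| := by rw [hμ]; simp
      _ ≤ ∑ i, v i * (∑ j, Bmat n l i j * |w j|) := by
          apply Finset.sum_le_sum
          intro i _
          apply mul_le_mul_of_nonneg_left _ (hv i).le
          calc |((Bmat n l).mulVec w) i| = |∑ j, Bmat n l i j * w j| := rfl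
            _ ≤ ∑ j, |Bmat n l i j * w j| := Finset.abs_sum_le_sum_abs _ _
            _ = ∑ j, Bmat n l i j * |w j| := by
                apply Finset.sum_congr rfl
                intro j _
                rw [abs_mul, abs_of_nonneg (Bmat_nonneg n l hl i j)]
      _ = ∑ j, (∑ i, Bmat n l i j * v i) * |w j| := by
          simp_rw [Finset.mul_sum]
          rw [Finset.sum_comm]
          exact Finset.sum_congr rfl fun j _ => by
            rw [Finset.sum_mul]
            exact Finset.sum_congr rfl fun i _ => by ring
      _ = ∑ j, σ * v j * |w j| := by
          apply Finset.sum_congr rfl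
          intro j _
          have hs : ∑ i, Bmat n l i j * v i = σ * v j := by
            have h1 : ∑ i, Bmat n l i j * v i = ((Bmat n l).mulVec v) j := by
              apply Finset.sum_congr rfl
              intro i _
              rw [Bmat_symm]
            rw [h1, hσ]
            simp
          rw [hs]
      _ = σ * ∑ i, v i * |w i| := by
          rw [Finset.mul_sum]
          exact Finset.sum_congr rfl fun i _ => by ring
  have hpos : 0 < ∑ i, v i * |w i| := by
    rcases Function.ne_iff.1 hw with ⟨k, hk⟩
    apply Finset.sum_pos'
    · intro i _; exact mul_nonneg (hv i).le (abs_nonneg _)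
    · exact ⟨k, Finset.mem_univ k, mul_pos (hv k) (abs_pos.2 hk)⟩
  exact (le_abs_self μ).trans (le_of_mul_le_mul_right key hpos)

lemma sigmaB_eq_perron (n : ℕ) (l : Fin (n+1) → ℝ) (hl : ∀ i, 0 < l i)
    {σ : ℝ} {v : Fin (n+2) → ℝ} (hv : ∀ i, 0 < v i)
    (hσ : (Bmat n l).mulVec v = σ • v) :
    sigmaB n l = σ := by
  have hv0 : v ≠ 0 := fun h0 => (hv 0).ne' (congrFun h0 0)
  have hne : {μ : ℝ | ∃ w : Fin (n+2) → ℝ, w ≠ 0 ∧ (Bmat n l).mulVec w = μ • w}.Nonempty :=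
    ⟨σ, v, hv0, hσ⟩
  unfold sigmaB
  apply le_antisymm
  · apply csSup_le hne
    rintro μ ⟨w, hw, hμ⟩
    exact eig_le_perron n l hl hv hσ hw hμ
  · exact le_csSup (bddAbove_eigs n l) ⟨v, hv0, hσ⟩

lemma Bmat_isHermitian (n : ℕ) (l : Fin (n+1) → ℝ) : (Bmat n l).IsHermitian := by
  rw [Matrix.IsHermitian]
  ext i j
  rw [Matrix.conjTranspose_apply]
  simp only [star_trivial]
  exact Bmat_symm n l j i

lemma rayleigh_le (n : ℕ) (l : Fin (n+1) → ℝ) (x : Fin (n+2) → ℝ) :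
    ∑ i, x i * ((Bmat n l).mulVec x) i ≤ sigmaB n l * ∑ i, x i ^ 2 := by
  classical
  have hA := Bmat_isHermitian n l
  set b := hA.eigenvectorBasis with hb
  set μ := hA.eigenvalues with hμ
  have hvec : ∀ i, (Bmat n l).mulVec (b i) = fun j => μ i * b i j := fun i =>
    hA.mulVec_eigenvectorBasis i
  have hmem : ∀ i, μ i ≤ sigmaB n l := by
    intro i
    apply le_csSup (bddAbove_eigs n l)
    refine ⟨b i, fun h => b.orthonormal.ne_zero i (by simpa using congrArg (WithLp.toLp 2) h), ?_⟩
    rw [hvec i]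
    funext j
    simp [smul_eq_mul]
  have hinner : ∀ u w : EuclideanSpace ℝ (Fin (n+2)), (inner ℝ u w : ℝ) = ∑ i, u i * w i := by
    intro u w
    simp [PiLp.inner_apply, RCLike.inner_apply, mul_comm]
  have hsym : ∀ u w : Fin (n+2) → ℝ,
      ∑ i, u i * ((Bmat n l).mulVec w) i = ∑ i, ((Bmat n l).mulVec u) i * w i := by
    intro u w
    have h1 : ∀ i, u i * ((Bmat n l).mulVec w) i = ∑ j, u i * (Bmat n l i j * w j) := by
      intro i
      rw [← Finset.mul_sum]
      rfl
    rw [Finset.sum_congr rfl fun i _ => h1 i, Finset.sum_comm]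
    apply Finset.sum_congr rfl
    intro j _
    have h2 : ((Bmat n l).mulVec u) j * w j = ∑ i, (Bmat n l j i * u i) * w j := by
      rw [← Finset.sum_mul]
      rfl
    rw [h2]
    apply Finset.sum_congr rfl
    intro i _
    rw [Bmat_symm n l j i]
    ring
  set x' : EuclideanSpace ℝ (Fin (n+2)) := WithLp.toLp 2 x with hx'
  set y' : EuclideanSpace ℝ (Fin (n+2)) := WithLp.toLp 2 ((Bmat n l).mulVec x) with hy'
  have hrepr : ∀ i, b.repr y' i = μ i * b.repr x' i := by
    intro i
    rw [b.repr_apply_apply, b.repr_apply_apply, hinner, hinner]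
    calc ∑ j, b i j * y' j = ∑ j, (b i) j * ((Bmat n l).mulVec x) j := rfl
      _ = ∑ j, ((Bmat n l).mulVec (b i)) j * x j := hsym (b i) x
      _ = μ i * ∑ j, b i j * x' j := by
          rw [hvec i, Finset.mul_sum]
          exact Finset.sum_congr rfl fun j _ => by ring
  have hpars : ∀ u w : EuclideanSpace ℝ (Fin (n+2)),
      (∑ i, u i * w i) = ∑ i, b.repr u i * b.repr w i := by
    intro u w
    rw [← hinner, ← b.repr.inner_map_map u w, hinner]
  calc ∑ i, x i * ((Bmat n l).mulVec x) i
      = ∑ i, x' i * y' i := rfl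
    _ = ∑ i, b.repr x' i * b.repr y' i := hpars x' y'
    _ = ∑ i, μ i * (b.repr x' i)^2 := by
        exact Finset.sum_congr rfl fun i _ => by rw [hrepr i]; ring
    _ ≤ ∑ i, sigmaB n l * (b.repr x' i)^2 :=
        Finset.sum_le_sum fun i _ => mul_le_mul_of_nonneg_right (hmem i) (sq_nonneg _)
    _ = sigmaB n l * ∑ i, b.repr x' i * b.repr x' i := by
        rw [Finset.mul_sum]
        exact Finset.sum_congr rfl fun i _ => by ring
    _ = sigmaB n l * ∑ i, x' i * x' i := by rw [← hpars x' x']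
    _ = sigmaB n l * ∑ i, x i ^ 2 := by
        congr 1
        exact Finset.sum_congr rfl fun i _ => by ring

noncomputable def cc (n : ℕ) : ℕ → ℝ := fun k =>
  if k = 0 then 1 else if k = n+1 then -1 else if k = 1 then 1/4 else 0
noncomputable def dd (n : ℕ) : ℕ → ℝ := fun j => (1 + cc n j) * (1 - cc n (j+1))
noncomputable def ff (n : ℕ) : ℝ := (n : ℝ) - 1/30
noncomputable def MM (n : ℕ) : ℕ → ℝ := fun j => ((n:ℝ)+1) / (ff n * dd n j)
noncomputable def VV (n : ℕ) : ℕ → ℝ := fun i =>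
  ∏ k ∈ Finset.range i, Real.sqrt ((1 + cc n k)/(1 - cc n (k+1)))
noncomputable def sg (n : ℕ) : ℝ := 2 * Real.sqrt (ff n / ((n:ℝ)+1))

section
variable {n : ℕ} (hn : 1 < n)
include hn

lemma cc_nonneg : ∀ k ≤ n, 0 ≤ cc n k := by
  intro k hk
  unfold cc
  split_ifs <;> first | omega | norm_num

lemma cc_le_quarter : ∀ k, 1 ≤ k → cc n k ≤ 1/4 := by
  intro k hk
  unfold cc
  split_ifs <;> norm_num
  omega

lemma hpos1 : ∀ j ≤ n, 0 < 1 + cc n j := by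
  intro j hj
  have := cc_nonneg hn j hj
  linarith

lemma hpos2 : ∀ j, 1 ≤ j → 0 < 1 - cc n j := by
  intro j hj
  have := cc_le_quarter hn j hj
  linarith

lemma dd_pos : ∀ j ≤ n, 0 < dd n j := by
  intro j hj
  exact mul_pos (hpos1 hn j hj) (hpos2 hn (j+1) (by omega))

lemma ff_pos : 0 < ff n := by
  unfold ff
  have : (2:ℝ) ≤ (n:ℝ) := by exact_mod_cast hn
  linarith

lemma sg_pos : 0 < sg n := by
  unfold sg
  have h1 : (0:ℝ) < ff n / ((n:ℝ)+1) := by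
    apply div_pos (ff_pos hn)
    positivity
  positivity

lemma dd_inv_eq : ∀ j ≤ n, 1/(dd n j) = 1 -
    ((if j = 0 then (1:ℝ)/3 else 0) + (if j = 1 then (1:ℝ)/5 else 0) +
     (if j = n then (1:ℝ)/2 else 0)) := by
  intro j hj
  have hc : ∀ k, k ≠ 0 → k ≠ n+1 → k ≠ 1 → cc n k = 0 := by
    intro k h0 h1 h2
    unfold cc
    rw [if_neg h0, if_neg h1, if_neg h2]
  have hc0 : cc n 0 = 1 := by unfold cc; simp
  have hc1 : cc n 1 = 1/4 := by unfold cc; rw [if_neg (by omega), if_neg (by omega), if_pos rfl]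
  have hcn1 : cc n (n+1) = -1 := by unfold cc; rw [if_neg (by omega), if_pos rfl]
  rcases Nat.eq_zero_or_pos j with h0 | h0
  · subst h0
    rw [if_pos rfl, if_neg (by omega), if_neg (by omega)]
    unfold dd
    rw [hc0, hc1]
    norm_num
  rcases eq_or_ne j 1 with h1 | h1
  · subst h1
    have h2 : cc n 2 = 0 := hc 2 (by omega) (by omega) (by omega)
    rw [if_neg (by omega), if_pos rfl, if_neg (by omega)]
    unfold dd
    rw [hc1, h2]
    norm_num
  rcases eq_or_ne j n with hjn | hjn
  · rw [hjn]
    rw [if_neg (by omega), if_neg (by omega), if_pos rfl]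
    unfold dd
    rw [hc n (by omega) (by omega) (by omega), hcn1]
    norm_num
  · rw [if_neg (by omega), if_neg h1, if_neg hjn]
    unfold dd
    rw [hc j (by omega) (by omega) h1, hc (j+1) (by omega) (by omega) (by omega)]
    norm_num

lemma sum_ind {k : ℕ} (hk : k < n+1) (x : ℝ) :
    ∑ j : Fin (n+1), (if (j:ℕ) = k then x else 0) = x := by
  rw [Finset.sum_eq_single (⟨k, hk⟩ : Fin (n+1))]
  · rw [if_pos rfl]
  · intro b _ hb
    exact if_neg (fun h => hb (Fin.ext h))
  · simp

lemma sum_dd_inv : ∑ j : Fin (n+1), 1/(dd n (j:ℕ)) = ff n := by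
  have h1 : ∀ j : Fin (n+1), 1/(dd n (j:ℕ)) = 1 -
      ((if (j:ℕ) = 0 then (1:ℝ)/3 else 0) + (if (j:ℕ) = 1 then (1:ℝ)/5 else 0) +
       (if (j:ℕ) = n then (1:ℝ)/2 else 0)) := fun j => dd_inv_eq hn (j:ℕ) (by omega)
  rw [Finset.sum_congr rfl fun j _ => h1 j]
  rw [Finset.sum_sub_distrib, Finset.sum_add_distrib, Finset.sum_add_distrib]
  rw [sum_ind hn (k := 0) (by omega), sum_ind hn (k := 1) (by omega),
      sum_ind hn (k := n) (by omega)]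
  simp only [Finset.sum_const, Finset.card_univ, Fintype.card_fin, nsmul_eq_mul, mul_one]
  unfold ff
  push_cast
  ring

lemma sum_MM : ∑ j : Fin (n+1), MM n (j:ℕ) = (n:ℝ)+1 := by
  have h1 : ∀ j : Fin (n+1), MM n (j:ℕ) = ((n:ℝ)+1)/(ff n) * (1/(dd n (j:ℕ))) := by
    intro j
    unfold MM
    rw [div_mul_eq_div_mul_one_div]
  rw [Finset.sum_congr rfl fun j _ => h1 j, ← Finset.mul_sum, sum_dd_inv hn]
  rw [div_mul_eq_mul_div, mul_div_assoc, div_self (ff_pos hn).ne', mul_one]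

lemma VV_pos : ∀ i ≤ n+1, 0 < VV n i := by
  intro i hi
  unfold VV
  apply Finset.prod_pos
  intro k hk
  have hk' : k < i := Finset.mem_range.mp hk
  apply Real.sqrt_pos.mpr
  apply div_pos (hpos1 hn k (by omega)) (hpos2 hn (k+1) (by omega))

lemma MM_pos : ∀ j ≤ n, 0 < MM n j := by
  intro j hj
  unfold MM
  apply div_pos (by positivity) (mul_pos (ff_pos hn) (dd_pos hn j hj))

lemma MM_rpow : ∀ j ≤ n, MM n j ^ (-(1/2) : ℝ) = Real.sqrt (ff n * dd n j / ((n:ℝ)+1)) := by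
  intro j hj
  have h1 : MM n j ^ (-(1/2) : ℝ) = (MM n j ^ ((1/2) : ℝ))⁻¹ := by
    rw [← Real.rpow_neg (MM_pos hn j hj).le]
  rw [h1, ← Real.sqrt_eq_rpow, ← Real.sqrt_inv]
  congr 1
  unfold MM
  rw [inv_div]

lemma sg_half : sg n / 2 = Real.sqrt (ff n / ((n:ℝ)+1)) := by
  unfold sg
  ring

lemma key_I : ∀ j ≤ n, Real.sqrt (ff n * dd n j / ((n:ℝ)+1)) * VV n (j+1)
    = (sg n / 2) * (1 + cc n j) * VV n j := by
  intro j hj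
  have hV : VV n (j+1) = VV n j * Real.sqrt ((1 + cc n j)/(1 - cc n (j+1))) := by
    unfold VV
    rw [Finset.prod_range_succ]
  rw [hV, sg_half hn]
  have h1 : 0 < 1 - cc n (j+1) := hpos2 hn (j+1) (by omega)
  have h2 : 0 < 1 + cc n j := hpos1 hn j hj
  have hd := dd_pos hn j hj
  have hf := ff_pos hn
  have hN : (0:ℝ) < (n:ℝ)+1 := by positivity
  have harg : ff n * dd n j / ((n:ℝ)+1) * ((1 + cc n j)/(1 - cc n (j+1)))
      = ff n / ((n:ℝ)+1) * (1 + cc n j)^2 := by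
    unfold dd
    field_simp
  rw [show Real.sqrt (ff n * dd n j / ((n:ℝ)+1)) * (VV n j * Real.sqrt ((1 + cc n j)/(1 - cc n (j+1))))
      = (Real.sqrt (ff n * dd n j / ((n:ℝ)+1)) * Real.sqrt ((1 + cc n j)/(1 - cc n (j+1)))) * VV n j
      by ring]
  rw [← Real.sqrt_mul (le_of_lt (div_pos (mul_pos hf hd) hN)), harg,
      Real.sqrt_mul (div_nonneg hf.le hN.le), Real.sqrt_sq h2.le]

lemma key_II : ∀ j ≤ n, Real.sqrt (ff n * dd n j / ((n:ℝ)+1)) * VV n j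
    = (sg n / 2) * (1 - cc n (j+1)) * VV n (j+1) := by
  intro j hj
  have hV : VV n (j+1) = VV n j * Real.sqrt ((1 + cc n j)/(1 - cc n (j+1))) := by
    unfold VV
    rw [Finset.prod_range_succ]
  rw [hV, sg_half hn]
  have h1 : 0 < 1 - cc n (j+1) := hpos2 hn (j+1) (by omega)
  have h2 : 0 < 1 + cc n j := hpos1 hn j hj
  have hd := dd_pos hn j hj
  have hf := ff_pos hn
  have hN : (0:ℝ) < (n:ℝ)+1 := by positivity
  have hrhs : Real.sqrt (ff n / ((n:ℝ)+1)) * (1 - cc n (j+1)) *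
      (VV n j * Real.sqrt ((1 + cc n j)/(1 - cc n (j+1))))
      = (Real.sqrt (ff n / ((n:ℝ)+1)) * Real.sqrt ((1 - cc n (j+1))^2) *
         Real.sqrt ((1 + cc n j)/(1 - cc n (j+1)))) * VV n j := by
    rw [Real.sqrt_sq h1.le]
    ring
  rw [hrhs, ← Real.sqrt_mul (div_nonneg hf.le hN.le),
      ← Real.sqrt_mul (mul_nonneg (div_nonneg hf.le hN.le) (sq_nonneg _))]
  congr 2
  unfold dd
  field_simp

lemma cc_zero : cc n 0 = 1 := by unfold cc; simp

lemma cc_top : cc n (n+1) = -1 := by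
  unfold cc; rw [if_neg (by omega), if_pos rfl]

lemma eigen_eq : (Bmat n (fun j : Fin (n+1) => MM n (j:ℕ))).mulVec
      (fun i : Fin (n+2) => VV n (i:ℕ))
    = sg n • (fun i : Fin (n+2) => VV n (i:ℕ)) := by
  funext i
  rw [Bmat_mulVec]
  simp only [Pi.smul_apply, smul_eq_mul]
  by_cases hi0 : (i:ℕ) = 0
  · rw [dif_pos (show (i:ℕ)+1 < n+2 by omega), dif_neg (show ¬ 0 < (i:ℕ) by omega), add_zero]
    show MM n (i:ℕ) ^ (-(1/2) : ℝ) * VV n ((i:ℕ)+1) = sg n * VV n (i:ℕ)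
    rw [hi0, MM_rpow hn 0 (by omega), key_I hn 0 (by omega), cc_zero hn]
    ring
  by_cases hin : (i:ℕ) = n+1
  · rw [dif_neg (show ¬ ((i:ℕ)+1 < n+2) by omega), dif_pos (show 0 < (i:ℕ) by omega), zero_add]
    show MM n ((i:ℕ)-1) ^ (-(1/2) : ℝ) * VV n ((i:ℕ)-1) = sg n * VV n (i:ℕ)
    rw [hin]
    norm_num
    rw [MM_rpow hn n le_rfl, key_II hn n le_rfl, cc_top hn]
    ring
  · have hlt : (i:ℕ) < n+1 := by have := i.isLt; omega
    rw [dif_pos (by omega), dif_pos (by omega)]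
    show MM n (i:ℕ) ^ (-(1/2) : ℝ) * VV n ((i:ℕ)+1)
        + MM n ((i:ℕ)-1) ^ (-(1/2) : ℝ) * VV n ((i:ℕ)-1) = sg n * VV n (i:ℕ)
    obtain ⟨k, hk⟩ := Nat.exists_eq_succ_of_ne_zero hi0
    rw [hk]
    norm_num
    rw [MM_rpow hn (k+1) (by omega), MM_rpow hn k (by omega),
        key_I hn (k+1) (by omega), key_II hn k (by omega)]
    ring

lemma upper_bound_aux : ∃ m : Fin (n+1) → ℝ,
    Feasible n m ∧ sigmaB n m < 2 * Real.sqrt (1 - 1/((n:ℝ)+1)) := by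
  have hN : (0:ℝ) < (n:ℝ)+1 := by positivity
  refine ⟨fun j => MM n (j:ℕ), ⟨fun j => MM_pos hn _ (by omega), ?_⟩, ?_⟩
  · rw [sum_MM hn, div_self hN.ne']
  · have hsig := sigmaB_eq_perron n (fun j : Fin (n+1) => MM n (j:ℕ))
      (fun j => MM_pos hn _ (by omega))
      (fun i : Fin (n+2) => VV_pos hn (i:ℕ) (by omega))
      (eigen_eq hn)
    rw [hsig]
    unfold sg
    have h2 : (2:ℝ) ≤ n := by exact_mod_cast hn
    have h1 : ff n / ((n:ℝ)+1) < 1 - 1/((n:ℝ)+1) := by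
      have he : 1 - 1/((n:ℝ)+1) = (n:ℝ)/((n:ℝ)+1) := by field_simp; ring
      rw [he, div_lt_div_iff₀ hN hN]
      unfold ff
      nlinarith
    exact mul_lt_mul_of_pos_left
      (Real.sqrt_lt_sqrt (div_nonneg (ff_pos hn).le hN.le) h1) two_pos

end

lemma lower_bound_aux (n : ℕ) (hn : 1 < n) (l : Fin (n+1) → ℝ) (hl : Feasible n l) :
    2 * Real.sqrt (1 - 4 * Real.log 2 / ((n : ℝ) + 1)) < sigmaB n l := by
  obtain ⟨hpos, hsum⟩ := hl
  have hN2 : (2:ℝ) ≤ (n:ℝ) := by exact_mod_cast hn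
  have hN : (0:ℝ) < (n:ℝ) + 1 := by linarith
  have hsl : ∑ i, l i ≤ (n:ℝ) + 1 := by
    rw [div_le_one hN] at hsum
    exact hsum
  -- a_i = (l i)^(-1/2) = (sqrt (l i))⁻¹
  have ha : ∀ i, (l i) ^ (-(1/2):ℝ) = (Real.sqrt (l i))⁻¹ := by
    intro i
    rw [show (-(1/2):ℝ) = -(1/2) from rfl, Real.rpow_neg (hpos i).le, ← Real.sqrt_eq_rpow]
  -- Cauchy-Schwarz 1: T ≤ n+1
  have hT : ∑ i, Real.sqrt (l i) ≤ (n:ℝ) + 1 := by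
    have h1 := Finset.sum_mul_sq_le_sq_mul_sq Finset.univ
      (fun i : Fin (n+1) => Real.sqrt (l i)) (fun _ => (1:ℝ))
    simp only [mul_one, one_pow, Finset.sum_const, Finset.card_univ, Fintype.card_fin,
      nsmul_eq_mul] at h1
    have h2 : ∑ i, Real.sqrt (l i) ^ 2 = ∑ i, l i :=
      Finset.sum_congr rfl fun i _ => Real.sq_sqrt (hpos i).le
    rw [h2] at h1
    have h3 : (∑ i, Real.sqrt (l i))^2 ≤ ((n:ℝ)+1)^2 := by
      calc (∑ i, Real.sqrt (l i))^2 ≤ (∑ i, l i) * ((n:ℝ)+1) := by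
            exact_mod_cast h1
        _ ≤ ((n:ℝ)+1)^2 := by nlinarith
    have h4 : 0 ≤ ∑ i, Real.sqrt (l i) :=
      Finset.sum_nonneg fun i _ => Real.sqrt_nonneg _
    nlinarith
  -- Cauchy-Schwarz 2: S ≥ n+1
  have hS : (n:ℝ) + 1 ≤ ∑ i, (Real.sqrt (l i))⁻¹ := by
    have h1 := Finset.sum_mul_sq_le_sq_mul_sq Finset.univ
      (fun i : Fin (n+1) => Real.sqrt (Real.sqrt (l i)))
      (fun i : Fin (n+1) => (Real.sqrt (Real.sqrt (l i)))⁻¹)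
    have hss : ∀ i : Fin (n+1), 0 < Real.sqrt (Real.sqrt (l i)) :=
      fun i => Real.sqrt_pos.2 (Real.sqrt_pos.2 (hpos i))
    have h2 : ∀ i : Fin (n+1),
        Real.sqrt (Real.sqrt (l i)) * (Real.sqrt (Real.sqrt (l i)))⁻¹ = 1 :=
      fun i => mul_inv_cancel₀ (hss i).ne'
    rw [Finset.sum_congr rfl fun i _ => h2 i] at h1
    simp only [Finset.sum_const, Finset.card_univ, Fintype.card_fin, nsmul_eq_mul,
      mul_one] at h1
    have h3 : ∑ i : Fin (n+1), Real.sqrt (Real.sqrt (l i)) ^ 2 = ∑ i, Real.sqrt (l i) :=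
      Finset.sum_congr rfl fun i _ => Real.sq_sqrt (Real.sqrt_nonneg _)
    have h4 : ∑ i : Fin (n+1), ((Real.sqrt (Real.sqrt (l i)))⁻¹) ^ 2
        = ∑ i, (Real.sqrt (l i))⁻¹ := by
      apply Finset.sum_congr rfl
      intro i _
      rw [inv_pow, Real.sq_sqrt (Real.sqrt_nonneg _)]
    rw [h3, h4] at h1
    have h5 : ((n:ℝ)+1)^2 ≤ (∑ i, Real.sqrt (l i)) * (∑ i, (Real.sqrt (l i))⁻¹) := by
      exact_mod_cast h1
    have h6 : 0 ≤ ∑ i, (Real.sqrt (l i))⁻¹ :=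
      Finset.sum_nonneg fun i _ => inv_nonneg.2 (Real.sqrt_nonneg _)
    nlinarith
  -- Rayleigh with all-ones vector
  have hray := rayleigh_le n l (fun _ => (1:ℝ))
  have hquad : ∑ i : Fin (n+2), (1:ℝ) * ((Bmat n l).mulVec (fun _ => 1)) i
      = 2 * ∑ j : Fin (n+1), (l j) ^ (-(1/2):ℝ) := by
    have h1 : ∀ i : Fin (n+2), (1:ℝ) * ((Bmat n l).mulVec (fun _ => 1)) i
        = (if h : (i : ℕ) + 1 < n + 2 then l ⟨(i : ℕ), by omega⟩ ^ (-(1/2) : ℝ) else 0)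
        + (if h : 0 < (i : ℕ) then
            l ⟨(i : ℕ) - 1, by have := i.isLt; omega⟩ ^ (-(1/2) : ℝ) else 0) := by
      intro i
      rw [one_mul, Bmat_mulVec]
      congr 1
      · split_ifs <;> simp
      · split_ifs <;> simp
    rw [Finset.sum_congr rfl fun i _ => h1 i, Finset.sum_add_distrib]
    have hA1 : (∑ i : Fin (n+2), if h : (i : ℕ) + 1 < n + 2 then
        l ⟨(i : ℕ), by omega⟩ ^ (-(1/2) : ℝ) else 0)
        = ∑ j : Fin (n+1), (l j) ^ (-(1/2):ℝ) := by
      rw [Fin.sum_univ_castSucc]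
      have hlast : (if h : ((Fin.last (n+1) : Fin (n+2)) : ℕ) + 1 < n + 2 then
          l ⟨((Fin.last (n+1) : Fin (n+2)) : ℕ), by omega⟩ ^ (-(1/2) : ℝ) else 0) = 0 := by
        rw [dif_neg]
        simp [Fin.last]
      rw [hlast, add_zero]
      apply Finset.sum_congr rfl
      intro j _
      rw [dif_pos (show ((j.castSucc : Fin (n+2)) : ℕ) + 1 < n + 2 by
        rw [Fin.coe_castSucc]; omega)]
      apply congrArg (fun z => z ^ (-(1/2):ℝ))
      apply congrArg l
      exact Fin.ext (Fin.coe_castSucc j)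
    have hA2 : (∑ i : Fin (n+2), if h : 0 < (i : ℕ) then
        l ⟨(i : ℕ) - 1, by have := i.isLt; omega⟩ ^ (-(1/2) : ℝ) else 0)
        = ∑ j : Fin (n+1), (l j) ^ (-(1/2):ℝ) := by
      rw [Fin.sum_univ_succ]
      have h0 : (if h : 0 < ((0 : Fin (n+2)) : ℕ) then
          l ⟨((0 : Fin (n+2)) : ℕ) - 1, by omega⟩ ^ (-(1/2) : ℝ) else 0) = 0 := by
        rw [dif_neg]
        simp
      rw [h0, zero_add]
      apply Finset.sum_congr rfl
      intro j _
      rw [dif_pos (show 0 < ((j.succ : Fin (n+2)) : ℕ) by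
        rw [Fin.val_succ]; omega)]
      apply congrArg (fun z => z ^ (-(1/2):ℝ))
      apply congrArg l
      exact Fin.ext (by simp)
    rw [hA1, hA2]
    ring
  have hones : ∑ i : Fin (n+2), ((1:ℝ))^2 = (n:ℝ) + 2 := by
    simp only [one_pow, Finset.sum_const, Finset.card_univ, Fintype.card_fin, nsmul_eq_mul,
      mul_one]
    push_cast
    ring
  rw [hquad, hones] at hray
  have hsig : 2 * ((n:ℝ)+1) / ((n:ℝ)+2) ≤ sigmaB n l := by
    have h7 : ∑ j : Fin (n+1), (l j) ^ (-(1/2):ℝ) = ∑ i, (Real.sqrt (l i))⁻¹ :=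
      Finset.sum_congr rfl fun i _ => ha i
    rw [h7] at hray
    rw [div_le_iff₀ (by linarith)]
    calc 2 * ((n:ℝ)+1) ≤ 2 * ∑ i, (Real.sqrt (l i))⁻¹ := by linarith
      _ ≤ sigmaB n l * ((n:ℝ)+2) := hray
  -- numeric comparison
  have hlog : (0.6931471803:ℝ) < Real.log 2 := Real.log_two_gt_d9
  have hfrac : (0:ℝ) < ((n:ℝ)+1)/((n:ℝ)+2) := by positivity
  have hkey : Real.sqrt (1 - 4 * Real.log 2 / ((n : ℝ) + 1)) < ((n:ℝ)+1)/((n:ℝ)+2) := by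
    rw [Real.sqrt_lt' hfrac]
    have hst1 : 1 - 4 * Real.log 2 / ((n : ℝ) + 1) < 1 - 2 / ((n:ℝ)+1) := by
      have h8 : (0:ℝ) < (4 * Real.log 2 - 2)/((n:ℝ)+1) := div_pos (by nlinarith) hN
      have hsplit : (4 * Real.log 2 - 2)/((n:ℝ)+1)
          = 4 * Real.log 2/((n:ℝ)+1) - 2/((n:ℝ)+1) := by ring
      linarith [hsplit ▸ h8]
    have heq : 1 - 2/((n:ℝ)+1) = ((n:ℝ)-1)/((n:ℝ)+1) := by
      field_simp
      ring
    have hle : ((n:ℝ)-1)/((n:ℝ)+1) ≤ (((n:ℝ)+1)/((n:ℝ)+2))^2 := by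
      rw [div_pow, div_le_div_iff₀ hN (by positivity)]
      nlinarith
    linarith
  calc 2 * Real.sqrt (1 - 4 * Real.log 2 / ((n : ℝ) + 1))
      < 2 * (((n:ℝ)+1)/((n:ℝ)+2)) := by linarith
    _ = 2 * ((n:ℝ)+1) / ((n:ℝ)+2) := by ring
    _ ≤ sigmaB n l := hsig

/-- for `n > 1`, `2√(1 - 4ln2/(n+1)) < σ̄ < 2√(1 - 1/(n+1))`. -/
theorem stmt_14 (n : ℕ) (hn : 1 < n) (l : Fin (n+1) → ℝ)
    (hmin : IsMinimizer n l) :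
    2 * Real.sqrt (1 - 4 * Real.log 2 / ((n : ℝ) + 1)) < sigmaB n l ∧
    sigmaB n l < 2 * Real.sqrt (1 - 1 / ((n : ℝ) + 1)) := by
  obtain ⟨hfeas, hminim⟩ := hmin
  refine ⟨lower_bound_aux n hn l hfeas, ?_⟩
  obtain ⟨m, hmfeas, hm⟩ := upper_bound_aux hn
  exact lt_of_le_of_lt (hminim m hmfeas) hm
end

section
/- For every ε > 0 there exists N ∈ ℕ such that for every n ∈ ℕ with n ≥ 1 and every minimizer λ̄ of σ(B(·)) over Λ_n, the number of indices i ∈ {0,…,n} for which |λ̄_i − 1| ≥ ε is at most N (i.e., |λ̄_i − 1| < ε for all but at most N indices). -/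
open Real

section Aux

open Matrix Finset

set_option linter.unusedSectionVars false

namespace Stmt18Aux

variable {m : Type*} [Fintype m] [DecidableEq m] [Nonempty m]

lemma star_eq_transpose_real (U : Matrix m m ℝ) : star U = Uᵀ := by
  ext i j; simp [Matrix.star_apply]

lemma rayleigh_le (A : Matrix m m ℝ) (hA : A.IsHermitian) (x : m → ℝ) :
    x ⬝ᵥ (A *ᵥ x) ≤ (Finset.univ.sup' Finset.univ_nonempty hA.eigenvalues) * (x ⬝ᵥ x) := by
  set U : Matrix m m ℝ := (hA.eigenvectorUnitary : Matrix m m ℝ) with hU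
  set y : m → ℝ := star U *ᵥ x with hy
  have hUs : U * star U = 1 := (Matrix.mem_unitaryGroup_iff).mp hA.eigenvectorUnitary.2
  have hdot : ∀ z : m → ℝ, x ⬝ᵥ (U *ᵥ z) = y ⬝ᵥ z := by
    intro z
    rw [dotProduct_mulVec, hy, star_eq_transpose_real, Matrix.mulVec_transpose]
  have h1 : x ⬝ᵥ (A *ᵥ x) = ∑ i, hA.eigenvalues i * (y i * y i) := by
    conv_lhs => rw [hA.spectral_theorem, Unitary.conjStarAlgAut_apply]
    rw [← Matrix.mulVec_mulVec, ← Matrix.mulVec_mulVec, hdot]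
    simp only [dotProduct]
    congr 1; ext i
    rw [Matrix.mulVec_diagonal]
    show y i * (_ * y i) = _
    ring_nf
    rfl
  have h2 : x ⬝ᵥ x = y ⬝ᵥ y := by
    have h := hdot (star U *ᵥ x)
    rw [Matrix.mulVec_mulVec, hUs, Matrix.one_mulVec, ← hy] at h
    exact h
  rw [h1, h2]
  have hle : ∀ i, hA.eigenvalues i * (y i * y i) ≤
      (Finset.univ.sup' Finset.univ_nonempty hA.eigenvalues) * (y i * y i) := by
    intro i
    exact mul_le_mul_of_nonneg_right (Finset.le_sup' _ (mem_univ i)) (mul_self_nonneg _)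
  calc ∑ i, hA.eigenvalues i * (y i * y i)
      ≤ ∑ i, (Finset.univ.sup' Finset.univ_nonempty hA.eigenvalues) * (y i * y i) :=
        Finset.sum_le_sum fun i _ => hle i
    _ = _ := by rw [← Finset.mul_sum]; rfl

lemma sup_eigen_mem (A : Matrix m m ℝ) (hA : A.IsHermitian) :
    ∃ v : m → ℝ, v ≠ 0 ∧ A *ᵥ v = (Finset.univ.sup' Finset.univ_nonempty hA.eigenvalues) • v := by
  obtain ⟨i0, -, hi0⟩ := Finset.exists_mem_eq_sup' (Finset.univ_nonempty (α := m)) hA.eigenvalues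
  refine ⟨(WithLp.equiv 2 _) (hA.eigenvectorBasis i0), ?_, ?_⟩
  · intro h
    have : hA.eigenvectorBasis i0 = 0 := by
      apply (WithLp.equiv 2 _).injective
      simpa using h
    exact hA.eigenvectorBasis.toBasis.ne_zero i0 (by simpa using this)
  · rw [hi0]; exact hA.mulVec_eigenvectorBasis i0

lemma dot_self_pos {v : m → ℝ} (hv : v ≠ 0) : 0 < v ⬝ᵥ v := by
  have : ∃ i, v i ≠ 0 := by
    by_contra h
    push_neg at h
    exact hv (funext h)
  obtain ⟨i, hi⟩ := this
  exact Finset.sum_pos' (fun j _ => mul_self_nonneg _)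
    ⟨i, mem_univ i, mul_self_pos.mpr hi⟩

lemma Bmat_herm (n : ℕ) (l : Fin (n+1) → ℝ) : (Bmat n l).IsHermitian := by
  show (Bmat n l)ᴴ = Bmat n l
  ext i j
  simp only [Matrix.conjTranspose_apply, Bmat, Matrix.of_apply, star_trivial]
  split_ifs with h1 h2 h3 h4 h5 <;> first | rfl | omega

lemma Bmat_qf (n : ℕ) (l : Fin (n+1) → ℝ) (v : Fin (n+2) → ℝ) :
    v ⬝ᵥ (Bmat n l *ᵥ v) =
      ∑ k : Fin (n+1), l k ^ (-(1/2) : ℝ) * (2 * (v k.castSucc * v k.succ)) := by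
  classical
  set F : Fin (n+2) → Fin (n+2) → ℝ := fun i j =>
    if h : (i : ℕ) + 1 = (j : ℕ) then
      l ⟨(i : ℕ), by have := j.isLt; omega⟩ ^ (-(1/2) : ℝ) * (v i * v j)
    else 0 with hF
  have claim1 : ∀ i j, v i * (Bmat n l i j * v j) = F i j + F j i := by
    intro i j
    by_cases h1 : (i : ℕ) + 1 = (j : ℕ)
    · have h2 : ¬ ((j : ℕ) + 1 = (i : ℕ)) := by omega
      simp only [hF, Bmat, Matrix.of_apply, dif_pos h1, dif_neg h2, add_zero]
      ring
    · by_cases h2 : (j : ℕ) + 1 = (i : ℕ)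
      · simp only [hF, Bmat, Matrix.of_apply, dif_pos h2, dif_neg h1, zero_add]
        ring
      · simp only [hF, Bmat, Matrix.of_apply, dif_neg h1, dif_neg h2]
        ring
  have inner : ∀ i : Fin (n+2), (∑ j, F i j) =
      if h : (i : ℕ) < n + 1 then
        l ⟨(i : ℕ), h⟩ ^ (-(1/2) : ℝ) * (v i * v ⟨(i : ℕ) + 1, by omega⟩) else 0 := by
    intro i
    by_cases hi : (i : ℕ) < n + 1
    · rw [dif_pos hi]
      rw [Finset.sum_eq_single_of_mem (⟨(i : ℕ) + 1, by omega⟩ : Fin (n+2)) (mem_univ _)]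
      · simp only [hF]
        simp
      · intro j _ hne
        simp only [hF]
        rw [dif_neg]
        intro hc
        exact hne (Fin.ext hc.symm)
    · rw [dif_neg hi]
      apply Finset.sum_eq_zero
      intro j _
      simp only [hF]
      rw [dif_neg]
      intro hc
      have := j.isLt
      omega
  have claim2 : (∑ i, ∑ j, F i j) =
      ∑ k : Fin (n+1), l k ^ (-(1/2) : ℝ) * (v k.castSucc * v k.succ) := by
    calc (∑ i, ∑ j, F i j)
        = ∑ i : Fin (n+2), (if h : (i : ℕ) < n + 1 then
            l ⟨(i : ℕ), h⟩ ^ (-(1/2) : ℝ) * (v i * v ⟨(i : ℕ) + 1, by omega⟩) else 0) :=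
          Finset.sum_congr rfl fun i _ => inner i
      _ = _ := by
          rw [Fin.sum_univ_castSucc]
          have hlast : ¬ ((Fin.last (n+1) : ℕ) < n + 1) := by simp
          rw [dif_neg hlast, add_zero]
          apply Finset.sum_congr rfl
          intro k _
          have hk : ((k.castSucc : Fin (n+2)) : ℕ) < n + 1 := by
            simpa using k.isLt
          rw [dif_pos hk]
          have e1 : (⟨((k.castSucc : Fin (n+2)) : ℕ), hk⟩ : Fin (n+1)) = k := by
            ext; simp
          have e2 : ∀ hp : ((k.castSucc : Fin (n+2)) : ℕ) + 1 < n + 2,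
              (⟨((k.castSucc : Fin (n+2)) : ℕ) + 1, hp⟩ : Fin (n+2)) = k.succ := by
            intro hp; ext; simp
          simp only [e1, e2]
  have hmv : v ⬝ᵥ (Bmat n l *ᵥ v) = ∑ i, ∑ j, v i * (Bmat n l i j * v j) := by
    simp only [dotProduct, Matrix.mulVec, dotProduct, Finset.mul_sum]
  rw [hmv]
  calc ∑ i, ∑ j, v i * (Bmat n l i j * v j)
      = ∑ i, ∑ j, (F i j + F j i) := by
        exact Finset.sum_congr rfl fun i _ => Finset.sum_congr rfl fun j _ => claim1 i j
    _ = (∑ i, ∑ j, F i j) + (∑ i, ∑ j, F j i) := by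
        rw [← Finset.sum_add_distrib]
        exact Finset.sum_congr rfl fun i _ => Finset.sum_add_distrib
    _ = (∑ i, ∑ j, F i j) + (∑ i, ∑ j, F i j) := by rw [Finset.sum_comm (f := fun i j => F j i)]
    _ = _ := by
        rw [claim2, ← Finset.sum_add_distrib]
        apply Finset.sum_congr rfl
        intro k _
        ring

/-- `sigmaB` equals the largest eigenvalue from the spectral theorem. -/
lemma sigmaB_eq (n : ℕ) (l : Fin (n+1) → ℝ) :
    sigmaB n l = Finset.univ.sup' Finset.univ_nonempty (Bmat_herm n l).eigenvalues := by
  set lstar := Finset.univ.sup' Finset.univ_nonempty (Bmat_herm n l).eigenvalues with hl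
  set S := {μ : ℝ | ∃ v : Fin (n+2) → ℝ, v ≠ 0 ∧ (Bmat n l).mulVec v = μ • v} with hS
  have hub : ∀ μ ∈ S, μ ≤ lstar := by
    rintro μ ⟨v, hv, hev⟩
    have h1 : v ⬝ᵥ ((Bmat n l) *ᵥ v) = μ * (v ⬝ᵥ v) := by
      rw [hev, dotProduct_smul, smul_eq_mul]
    have h2 := rayleigh_le (Bmat n l) (Bmat_herm n l) v
    rw [h1] at h2
    have hpos := dot_self_pos hv
    exact le_of_mul_le_mul_right (by linarith) hpos
  have hmem : lstar ∈ S := sup_eigen_mem (Bmat n l) (Bmat_herm n l)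
  refine le_antisymm ?_ ?_
  · exact csSup_le ⟨lstar, hmem⟩ hub
  · exact le_csSup ⟨lstar, hub⟩ hmem

lemma feasible_one (n : ℕ) : Feasible n (fun _ => (1:ℝ)) := by
  constructor
  · intro i; norm_num
  · rw [div_le_one (by positivity)]
    simp [Finset.sum_const, Finset.card_univ]

lemma sigmaB_one_le_two (n : ℕ) : sigmaB n (fun _ => (1:ℝ)) ≤ 2 := by
  rw [sigmaB_eq]
  obtain ⟨v, hv, hev⟩ := sup_eigen_mem (Bmat n (fun _ => 1)) (Bmat_herm n (fun _ => 1))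
  set lstar := Finset.univ.sup' Finset.univ_nonempty (Bmat_herm n (fun _ => (1:ℝ))).eigenvalues
  have h1 : v ⬝ᵥ ((Bmat n (fun _ => 1)) *ᵥ v) = lstar * (v ⬝ᵥ v) := by
    rw [hev, dotProduct_smul, smul_eq_mul]
  have h2 : v ⬝ᵥ ((Bmat n (fun _ => 1)) *ᵥ v) =
      ∑ k : Fin (n+1), 2 * (v k.castSucc * v k.succ) := by
    rw [Bmat_qf]
    apply Finset.sum_congr rfl
    intro k _
    rw [Real.one_rpow]
    ring
  have hcs : ∑ k : Fin (n+1), v k.castSucc * v k.castSucc ≤ v ⬝ᵥ v := by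
    have := Fin.sum_univ_castSucc (fun i : Fin (n+2) => v i * v i)
    simp only [dotProduct]
    rw [this]
    have := mul_self_nonneg (v (Fin.last (n+1)))
    linarith
  have hsc : ∑ k : Fin (n+1), v k.succ * v k.succ ≤ v ⬝ᵥ v := by
    have := Fin.sum_univ_succ (fun i : Fin (n+2) => v i * v i)
    simp only [dotProduct]
    rw [this]
    have := mul_self_nonneg (v 0)
    linarith
  have h3 : ∑ k : Fin (n+1), 2 * (v k.castSucc * v k.succ) ≤ 2 * (v ⬝ᵥ v) := by
    calc ∑ k : Fin (n+1), 2 * (v k.castSucc * v k.succ)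
        ≤ ∑ k : Fin (n+1), (v k.castSucc * v k.castSucc + v k.succ * v k.succ) := by
          apply Finset.sum_le_sum
          intro k _
          nlinarith [sq_nonneg (v k.castSucc - v k.succ)]
      _ = (∑ k : Fin (n+1), v k.castSucc * v k.castSucc)
            + (∑ k : Fin (n+1), v k.succ * v k.succ) := Finset.sum_add_distrib
      _ ≤ 2 * (v ⬝ᵥ v) := by linarith
  have hpos := dot_self_pos hv
  have hmain : lstar * (v ⬝ᵥ v) ≤ 2 * (v ⬝ᵥ v) := by
    rw [← h1, h2]
    exact h3
  exact le_of_mul_le_mul_right hmain hpos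

lemma inv_sqrt_key (lam : ℝ) (h : 0 < lam) : 3/2 - lam/2 ≤ (Real.sqrt lam)⁻¹ := by
  set s := Real.sqrt lam with hs
  have hspos : 0 < s := Real.sqrt_pos.mpr h
  have hs2 : s^2 = lam := Real.sq_sqrt h.le
  rw [inv_eq_one_div, le_div_iff₀ hspos]
  nlinarith [mul_nonneg (sq_nonneg (s-1)) (by linarith : (0:ℝ) ≤ s + 2)]

lemma inv_sqrt_key_bad (lam ε' : ℝ) (h : 0 < lam) (hε1 : 0 < ε') (hε2 : ε' ≤ 1/2)
    (hbad : ε' ≤ |lam - 1|) :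
    3/2 - lam/2 + ε'^2/18 ≤ (Real.sqrt lam)⁻¹ := by
  set s := Real.sqrt lam with hs
  have hspos : 0 < s := Real.sqrt_pos.mpr h
  have hs2 : s^2 = lam := Real.sq_sqrt h.le
  rw [inv_eq_one_div, le_div_iff₀ hspos]
  rcases le_or_gt lam 1 with hcase | hcase
  · -- low case : lam ≤ 1 - ε'
    have habs : |lam - 1| = 1 - lam := by
      rw [abs_of_nonpos (by linarith)]; ring
    have hlow : lam ≤ 1 - ε' := by rw [habs] at hbad; linarith
    have hs1 : s ≤ 1 := by nlinarith
    have h1 : ε'/2 ≤ 1 - s := by nlinarith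
    have h2 : ε'^2/4 ≤ (1-s)^2 := by nlinarith
    nlinarith [mul_le_mul_of_nonneg_right h2 (show (0:ℝ) ≤ s + 2 by linarith)]
  · -- high case : lam ≥ 1 + ε'
    have habs : |lam - 1| = lam - 1 := abs_of_pos (by linarith)
    have hhigh : 1 + ε' ≤ lam := by rw [habs] at hbad; linarith
    have hs1 : 1 ≤ s := by nlinarith
    rcases le_or_gt s 2 with hs3 | hs3
    · have h1 : ε'/3 ≤ s - 1 := by nlinarith
      have h2 : ε'^2/9 ≤ (s-1)^2 := by nlinarith
      nlinarith [mul_le_mul_of_nonneg_right h2 (show (0:ℝ) ≤ s + 2 by linarith)]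
    · have h4 : 4*s ≤ s^3 := by nlinarith
      have h6 : ε'^2 ≤ 1/4 := by nlinarith
      nlinarith [h4, h6, hspos, mul_le_mul_of_nonneg_right h6 hspos.le]

end Stmt18Aux

end Aux

/-- the turnpike property. For every `ε > 0` there is `N` such that for
every `n ≥ 1` and every minimizer `λ̄`, at most `N` indices satisfy `|λ̄_i - 1| ≥ ε`. -/
theorem stmt_18 :
    ∀ ε : ℝ, 0 < ε → ∃ N : ℕ, ∀ n : ℕ, 1 ≤ n →
      ∀ l : Fin (n+1) → ℝ, IsMinimizer n l →
        (Finset.univ.filter fun i : Fin (n+1) => ε ≤ |l i - 1|).card ≤ N := by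
  intro ε hε
  classical
  set ε' : ℝ := min ε (1/2) with hε'def
  have hε'pos : 0 < ε' := lt_min hε (by norm_num)
  have hε'le : ε' ≤ 1/2 := min_le_right _ _
  set δ : ℝ := ε'^2/18 with hδdef
  have hδpos : 0 < δ := by positivity
  refine ⟨Nat.ceil (1/δ), ?_⟩
  intro n hn l hmin
  obtain ⟨⟨hpos, hsum⟩, hopt⟩ := hmin
  have hnpos : (0:ℝ) < (n:ℝ) + 1 := by positivity
  have hbudget : (∑ i, l i) ≤ (n:ℝ) + 1 := by
    rw [div_le_one hnpos] at hsum; exact hsum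
  -- bad sets
  set bad : Finset (Fin (n+1)) := Finset.univ.filter (fun i => ε ≤ |l i - 1|) with hbaddef
  set bad' : Finset (Fin (n+1)) := Finset.univ.filter (fun i => ε' ≤ |l i - 1|) with hbad'def
  have hsub : bad ⊆ bad' := by
    intro i hi
    simp only [hbaddef, hbad'def, Finset.mem_filter] at hi ⊢
    exact ⟨hi.1, le_trans (min_le_left _ _) hi.2⟩
  have hcard : bad.card ≤ bad'.card := Finset.card_le_card hsub
  -- main estimate on ∑ (sqrt (l i))⁻¹
  set f : Fin (n+1) → ℝ := fun i => (Real.sqrt (l i))⁻¹ - (3/2 - l i/2) with hfdef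
  have hf0 : ∀ i, 0 ≤ f i := fun i => sub_nonneg.mpr (Stmt18Aux.inv_sqrt_key (l i) (hpos i))
  have hfδ : ∀ i ∈ bad', δ ≤ f i := by
    intro i hi
    simp only [hbad'def, Finset.mem_filter] at hi
    have := Stmt18Aux.inv_sqrt_key_bad (l i) ε' (hpos i) hε'pos hε'le hi.2
    simp only [hfdef]
    linarith
  have hsumf : (bad'.card : ℝ) * δ ≤ ∑ i, f i := by
    calc (bad'.card : ℝ) * δ = ∑ _i ∈ bad', δ := by
          rw [Finset.sum_const, nsmul_eq_mul]
      _ ≤ ∑ i ∈ bad', f i := Finset.sum_le_sum hfδ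
      _ ≤ ∑ i, f i := Finset.sum_le_sum_of_subset_of_nonneg (Finset.subset_univ _)
          (fun i _ _ => hf0 i)
  have hcardn : ((Finset.univ : Finset (Fin (n+1))).card : ℝ) = (n:ℝ) + 1 := by
    simp [Finset.card_univ]
  have hexp : ∑ i, (Real.sqrt (l i))⁻¹
      = (∑ i, f i) + ((3/2) * ((n:ℝ)+1) - (∑ i, l i)/2) := by
    calc ∑ i, (Real.sqrt (l i))⁻¹
        = ∑ i, (f i + (3/2 - l i/2)) := by
          apply Finset.sum_congr rfl
          intro i _
          simp only [hfdef]
          ring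
      _ = (∑ i, f i) + ∑ i, (3/2 - l i/2) := Finset.sum_add_distrib
      _ = (∑ i, f i) + ((3/2) * ((n:ℝ)+1) - (∑ i, l i)/2) := by
          congr 1
          rw [Finset.sum_sub_distrib, Finset.sum_const, nsmul_eq_mul, hcardn,
            ← Finset.sum_div]
          ring
  have hQlower : (n:ℝ) + 1 + (bad'.card : ℝ) * δ ≤ ∑ i, (Real.sqrt (l i))⁻¹ := by
    rw [hexp]
    linarith [hsumf, hbudget]
  -- spectral upper bound
  have hray := Stmt18Aux.rayleigh_le (Bmat n l) (Stmt18Aux.Bmat_herm n l) (fun _ => 1)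
  rw [← Stmt18Aux.sigmaB_eq] at hray
  have hq' : dotProduct (fun _ => (1:ℝ)) ((Bmat n l).mulVec (fun _ => 1))
      = 2 * ∑ i, (Real.sqrt (l i))⁻¹ := by
    rw [Stmt18Aux.Bmat_qf n l (fun _ => 1), Finset.mul_sum]
    apply Finset.sum_congr rfl
    intro k _
    have hrw : l k ^ (-(1/2) : ℝ) = (Real.sqrt (l k))⁻¹ := by
      rw [Real.rpow_neg (hpos k).le, ← Real.sqrt_eq_rpow]
    rw [hrw]
    ring
  have hones : dotProduct (fun _ => (1:ℝ)) ((fun _ => (1:ℝ)) : Fin (n+2) → ℝ)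
      = (n:ℝ) + 2 := by
    simp [dotProduct, Finset.sum_const, Finset.card_univ]
    try push_cast
    try ring
  have hup : sigmaB n l ≤ 2 :=
    le_trans (hopt _ (Stmt18Aux.feasible_one n)) (Stmt18Aux.sigmaB_one_le_two n)
  have hfin : 2 * ∑ i, (Real.sqrt (l i))⁻¹ ≤ 2 * ((n:ℝ) + 2) := by
    rw [← hq']
    calc dotProduct (fun _ => (1:ℝ)) ((Bmat n l).mulVec (fun _ => 1))
        ≤ sigmaB n l * dotProduct (fun _ => (1:ℝ)) ((fun _ => (1:ℝ)) : Fin (n+2) → ℝ) :=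
          hray
      _ = sigmaB n l * ((n:ℝ) + 2) := by rw [hones]
      _ ≤ 2 * ((n:ℝ) + 2) := mul_le_mul_of_nonneg_right hup (by positivity)
  -- conclude
  have hkδ : (bad'.card : ℝ) * δ ≤ 1 := by linarith
  have hkreal : (bad'.card : ℝ) ≤ 1/δ := by
    rw [le_div_iff₀ hδpos]
    exact hkδ
  have hkN : (bad'.card : ℝ) ≤ (Nat.ceil (1/δ) : ℝ) := le_trans hkreal (Nat.le_ceil _)
  have : bad'.card ≤ Nat.ceil (1/δ) := by exact_mod_cast hkN
  exact le_trans hcard this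
end
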